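/- If A, B are positive invertible operators with m ≤ (A^{−1/2} B A^{−1/2})^{1/2} ≤ M for positive reals m ≤ M, then (M+m)(A # B) ≥ MmA + B, where # is the operator geometric mean. -/

import Mathlib

/-- The Kantorovich constant. -/
noncomputable def Kc (x : ℝ) : ℝ := (x + 1) ^ 2 / (4 * x)

/-- The weighted operator geometric mean `A #_ν B`. -/
noncomputable def sharp {𝒜 : Type*} [CStarAlgebra 𝒜] [PartialOrder 𝒜] [StarOrderedRing 𝒜] (ν : ℝ) (a b : 𝒜) : 𝒜 :=
  CFC.rpow a (1/2) * CFC.rpow (CFC.rpow a (-(1/2)) * b * CFC.rpow a (-(1/2))) ν * CFC.rpow a (1/2)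

theorem stmt18 {𝒜 : Type*} [CStarAlgebra 𝒜] [PartialOrder 𝒜] [StarOrderedRing 𝒜]
    (A B : 𝒜) (hA : 0 ≤ A) (hB : 0 ≤ B) [Invertible A]
    (m M : ℝ) (hm : 0 < m) (hmM : m ≤ M)
    (h1 : m • (1:𝒜) ≤ CFC.sqrt (CFC.rpow A (-(1/2)) * B * CFC.rpow A (-(1/2))))
    (h2 : CFC.sqrt (CFC.rpow A (-(1/2)) * B * CFC.rpow A (-(1/2))) ≤ M • (1:𝒜)) :
    (M * m) • A + B ≤ (M + m) • sharp (1/2) A B := by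
  set C := CFC.rpow A (-(1/2)) * B * CFC.rpow A (-(1/2)) with hCdef
  have hAspec : (0 : NNReal) ∉ spectrum NNReal A :=
    spectrum.zero_notMem NNReal (isUnit_of_invertible A)
  have hAh : (0:𝒜) ≤ CFC.rpow A (-(1/2)) := CFC.rpow_nonneg
  have hC : 0 ≤ C := by
    have : 0 ≤ CFC.rpow A (-(1/2)) * B * CFC.rpow A (-(1/2)) :=
      conjugate_nonneg_of_nonneg hB hAh
    rwa [← hCdef] at this
  set S := CFC.sqrt C with hSdef
  have hS : 0 ≤ S := CFC.sqrt_nonneg _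
  have hSsa : IsSelfAdjoint S := .of_nonneg hS
  -- spectrum bounds
  have hspec : ∀ x ∈ spectrum ℝ S, m ≤ x ∧ x ≤ M := by
    have h1' : algebraMap ℝ 𝒜 m ≤ S := by
      rw [Algebra.algebraMap_eq_smul_one]; exact h1
    have h2' : S ≤ algebraMap ℝ 𝒜 M := by
      rw [Algebra.algebraMap_eq_smul_one]; exact h2
    rw [algebraMap_le_iff_le_spectrum] at h1'
    rw [le_algebraMap_iff_spectrum_le] at h2'
    exact fun x hx => ⟨h1' x hx, h2' x hx⟩
  -- the key positivity via CFC
  have hcfc : cfc (fun x : ℝ => (M - x) * (x - m)) S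
      = (M • (1:𝒜) - S) * (S - m • (1:𝒜)) := by
    rw [cfc_mul _ _ S (by fun_prop) (by fun_prop)]
    congr 1
    · rw [cfc_sub _ _ S (by fun_prop) (by fun_prop), cfc_const _ _, cfc_id' ℝ S,
        Algebra.algebraMap_eq_smul_one]
    · rw [cfc_sub _ _ S (by fun_prop) (by fun_prop), cfc_const _ _, cfc_id' ℝ S,
        Algebra.algebraMap_eq_smul_one]
  have hpos : 0 ≤ (M • (1:𝒜) - S) * (S - m • (1:𝒜)) := by
    rw [← hcfc]
    exact cfc_nonneg fun x hx =>
      mul_nonneg (sub_nonneg.2 (hspec x hx).2) (sub_nonneg.2 (hspec x hx).1)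
  have key : (M * m) • (1:𝒜) + S * S ≤ (M + m) • S := by
    rw [← sub_nonneg]
    have hexp : (M + m) • S - ((M * m) • (1:𝒜) + S * S)
        = (M • (1:𝒜) - S) * (S - m • (1:𝒜)) := by
      simp only [mul_sub, sub_mul, smul_mul_assoc, mul_smul_comm, smul_smul,
        one_mul, mul_one, add_smul]
      module
    rw [hexp]
    exact hpos
  -- conjugate by A^{1/2}
  have hR : (0:𝒜) ≤ CFC.rpow A (1/2) := CFC.rpow_nonneg
  have conj := conjugate_le_conjugate_of_nonneg key hR
  have hRR : CFC.rpow A (1/2) * CFC.rpow A (1/2) = A := by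
    rw [CFC.rpow_eq_pow, ← CFC.rpow_add (isUnit_of_invertible A)]
    norm_num [CFC.rpow_one A hA]
  have hRRinv : CFC.rpow A (1/2) * CFC.rpow A (-(1/2)) = 1 := by
    exact CFC.rpow_mul_rpow_neg _ ((isUnit_of_invertible A).isStrictlyPositive hA)
  have hRinvR : CFC.rpow A (-(1/2)) * CFC.rpow A (1/2) = 1 := by
    exact CFC.rpow_neg_mul_rpow _ ((isUnit_of_invertible A).isStrictlyPositive hA)
  have hLHS : CFC.rpow A (1/2) * ((M * m) • (1:𝒜) + S * S) * CFC.rpow A (1/2)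
      = (M * m) • A + B := by
    rw [mul_add, add_mul]
    congr 1
    · rw [mul_smul_comm, smul_mul_assoc, mul_one, hRR]
    · rw [CFC.sqrt_mul_sqrt_self C hC, hCdef]
      calc CFC.rpow A (1/2) * (CFC.rpow A (-(1/2)) * B * CFC.rpow A (-(1/2))) * CFC.rpow A (1/2)
          = (CFC.rpow A (1/2) * CFC.rpow A (-(1/2))) * B *
              (CFC.rpow A (-(1/2)) * CFC.rpow A (1/2)) := by
            simp only [mul_assoc]
        _ = B := by rw [hRRinv, hRinvR, one_mul, mul_one]
  have hRHS : CFC.rpow A (1/2) * ((M + m) • S) * CFC.rpow A (1/2)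
      = (M + m) • sharp (1/2) A B := by
    rw [mul_smul_comm, smul_mul_assoc]
    congr 1
    rw [sharp, hSdef, hCdef]
    congr 1
    congr 1
    exact CFC.sqrt_eq_rpow
  rw [hLHS, hRHS] at conj
  exact conj
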